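/- Let L̃ = {m·v + (n,0) : m,n ∈ ℤ} be the cover of a helical lattice and suppose N·Δ_M − M·Δ_N = 1 for the two closest vectors z_M = M·v + (Δ_M,0) and z_N = N·v + (Δ_N,0). Then on the cylinder the left parastichies (cosets of the subgroup generated by z_M in the lattice) are exactly M in number: the cosets j·z_N + ⟨z_M⟩ for j = 0,...,M−1 partition the lattice and j·z_N + ⟨z_M⟩ projects to the same parastichy as (j+M)·z_N + ⟨z_M⟩. -/
import Mathlib


/-- Projection from the plane to the cylinder `(ℝ/ℤ) × ℝ`. -/
noncomputable def pii (p : ℝ × ℝ) : AddCircle (1 : ℝ) × ℝ := ((p.1 : AddCircle (1 : ℝ)), p.2)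

lemma pii_add_one_horiz (p : ℝ × ℝ) : pii (p + ((1 : ℝ), (0 : ℝ))) = pii p := by
  unfold pii
  refine Prod.ext ?_ (by simp)
  show ((p.1 + 1 : ℝ) : AddCircle (1 : ℝ)) = (p.1 : ℝ)
  exact AddCircle.coe_add_period 1 p.1

/-- For a helical lattice with cover `{m•v + (n,0)}` and closest vectors
`z_M = M•v + (Δ_M,0)`, `z_N = N•v + (Δ_N,0)` with `N·Δ_M − M·Δ_N = 1`, the
cosets `j•z_N + ⟨z_M⟩` for `j = 0,…,M−1` partition the lattice (each lattice
point `m•v + (n,0)` lies, at the level of indices, in exactly one such coset,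
up to horizontal integer translation), and on the cylinder the coset for `j+M`
projects to the same parastichy as the coset for `j`. Hence there are exactly
`M` left parastichies. -/
theorem left_parastichies_count
    (M N ΔM ΔN : ℤ) (hM : 0 < M) (hN : 0 < N) (v zM zN : ℝ × ℝ)
    (hzM : zM = M • v + (((ΔM : ℝ), (0 : ℝ)) : ℝ × ℝ))
    (hzN : zN = N • v + (((ΔN : ℝ), (0 : ℝ)) : ℝ × ℝ))
    (hdet : N * ΔM - M * ΔN = 1) :
    (∀ j : ℤ,
        pii '' {p : ℝ × ℝ | ∃ k : ℤ, p = (j + M) • zN + k • zM}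
          = pii '' {p : ℝ × ℝ | ∃ k : ℤ, p = j • zN + k • zM}) ∧
    (∀ m n : ℤ, ∃! j : ℤ, 0 ≤ j ∧ j < M ∧
        ∃ k t : ℤ, m = j * N + k * M ∧ n = j * ΔN + k * ΔM + t) := by
  have hdetR : (N : ℝ) * ΔM - M * ΔN = 1 := by exact_mod_cast hdet
  obtain ⟨v1, v2⟩ := v
  have key : ∀ j k : ℤ, (j + M) • zN + k • zM + ((1 : ℝ), (0 : ℝ))
      = j • zN + (k + N) • zM := by
    intro j k
    subst hzM hzN
    simp only [Prod.smul_mk, zsmul_eq_mul, Prod.mk_add_mk, Prod.smul_def,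
      Prod.mk.injEq]
    push_cast
    constructor
    · linear_combination -hdetR
    · ring
  constructor
  · intro j
    ext q
    simp only [Set.mem_image, Set.mem_setOf_eq]
    constructor
    · rintro ⟨p, ⟨k, rfl⟩, rfl⟩
      exact ⟨j • zN + (k + N) • zM, ⟨k + N, rfl⟩, by rw [← key j k, pii_add_one_horiz]⟩
    · rintro ⟨p, ⟨k, rfl⟩, rfl⟩
      refine ⟨(j + M) • zN + (k - N) • zM, ⟨k - N, rfl⟩, ?_⟩
      rw [← pii_add_one_horiz ((j + M) • zN + (k - N) • zM), key j (k - N),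
        sub_add_cancel]
  · intro m n
    set q := m * ΔM / M with hq
    refine ⟨m * ΔM % M, ⟨Int.emod_nonneg _ hM.ne', Int.emod_lt_of_pos _ hM,
      q * N - m * ΔN, n - (m * ΔM % M) * ΔN - (q * N - m * ΔN) * ΔM, ?_, by ring⟩, ?_⟩
    · have hmod : m * ΔM % M = m * ΔM - M * q := Int.emod_def _ _
      rw [hmod]
      linear_combination (-m) * hdet
    · rintro j' ⟨hj0, hjM, k', t', hm', _⟩
      have hmod : m * ΔM % M = m * ΔM - M * q := Int.emod_def _ _
      have hm : m = (m * ΔM % M) * N + (q * N - m * ΔN) * M := by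
        rw [hmod]; linear_combination (-m) * hdet
      have hdvd : M ∣ (j' - m * ΔM % M) * N :=
        ⟨(q * N - m * ΔN) - k', by linear_combination hm - hm'⟩
      have hcop : IsCoprime M N := ⟨-ΔN, ΔM, by linarith⟩
      have hdvd2 := hcop.dvd_of_dvd_mul_right hdvd
      have h1 : 0 ≤ m * ΔM % M := Int.emod_nonneg _ hM.ne'
      have h2 : m * ΔM % M < M := Int.emod_lt_of_pos _ hM
      have := Int.eq_zero_of_abs_lt_dvd hdvd2 (abs_lt.mpr ⟨by omega, by omega⟩)
      omega
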